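/- arXiv:2404.05463 — 3 statements merged into one kernel-verified Lean document; each statement's English description precedes it below -/
import Mathlib

section
/- Define for A ∈ End(V) with A ω-skew-symmetric and commuting with all Ja (A in so*(2n)), the curvature operator R_A(x,y)z := κ ω(x,y) Az + (κ/2)(ω(x,z)Ay - Σ_a g_a(x,z)J_aAy + ω(Ay,z)x - Σ_a g_a(Ay,z)J_ax) - (κ/2)(ω(y,z)Ax - Σ_a g_a(y,z)J_aAx + ω(Ax,z)y - Σ_a g_a(Ax,z)J_ay) - (κ/2)Σ_a (g_a(x,Ay) - g_a(y,Ax))J_az. Then R_A satisfies the first Bianchi identity: R_A(x,y)z + R_A(y,z)x + R_A(z,x)y = 0 for all x,y,z. -/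
/-- The curvature operator R_A(x,y)z of Corollary `curvatureRQom`:
R_A(x,y)z = κ ω(x,y) Az
  + (κ/2)(ω(x,z)Ay - Σₐ gₐ(x,z)JₐAy + ω(Ay,z)x - Σₐ gₐ(Ay,z)Jₐx)
  - (κ/2)(ω(y,z)Ax - Σₐ gₐ(y,z)JₐAx + ω(Ax,z)y - Σₐ gₐ(Ax,z)Jₐy)
  - (κ/2) Σₐ (gₐ(x,Ay) - gₐ(y,Ax)) Jₐz,
where gₐ(u,w) = ω(u, Jₐ w). -/
noncomputable def curvR {V : Type*} [AddCommGroup V] [Module ℝ V]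
    (ω : LinearMap.BilinForm ℝ V) (J : Fin 3 → Module.End ℝ V)
    (A : Module.End ℝ V) (κ : ℝ) (x y z : V) : V :=
  κ • (ω x y • A z)
  + (κ / 2) • (ω x z • A y - ∑ a : Fin 3, ω x (J a z) • J a (A y)
      + ω (A y) z • x - ∑ a : Fin 3, ω (A y) (J a z) • J a x)
  - (κ / 2) • (ω y z • A x - ∑ a : Fin 3, ω y (J a z) • J a (A x)
      + ω (A x) z • y - ∑ a : Fin 3, ω (A x) (J a z) • J a y)
  - (κ / 2) • (∑ a : Fin 3, (ω x (J a (A y)) - ω y (J a (A x))) • J a z)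

/- STATEMENT 6: For A ∈ so*(2n) (A ω-skew-symmetric and commuting with all Jₐ), the
curvature operator R_A satisfies the first Bianchi identity. -/
theorem stmt6 (V : Type*) [AddCommGroup V] [Module ℝ V] [FiniteDimensional ℝ V]
    (n : ℕ) (hdim : Module.finrank ℝ V = 4 * n)
    (J : Fin 3 → Module.End ℝ V)
    (hJsq : ∀ a, J a * J a = -1)
    (hJJJ : J 0 * J 1 * J 2 = -1)
    (ω : LinearMap.BilinForm ℝ V)
    (hskew : ∀ x y, ω x y = - ω y x)
    (hnd : ∀ x, (∀ y, ω x y = 0) → x = 0)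
    (hherm : ∀ (a : Fin 3) x y, ω (J a x) (J a y) = ω x y)
    (κ : ℝ) (hκ : κ ≠ 0)
    (A : Module.End ℝ V)
    (hAskew : ∀ x y, ω (A x) y = - ω x (A y))
    (hAcomm : ∀ a, A * J a = J a * A) :
    ∀ x y z : V,
      curvR ω J A κ x y z + curvR ω J A κ y z x + curvR ω J A κ z x y = 0 := by
  intro x y z
  -- A commutes with each J a, pointwise
  have hAJ : ∀ (a : Fin 3) (w : V), A (J a w) = J a (A w) := by
    intro a w
    have := DFunLike.congr_fun (hAcomm a) w
    simpa [Module.End.mul_apply] using this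
  -- J a squares to -1, pointwise
  have hJsq' : ∀ (a : Fin 3) (w : V), J a (J a w) = -w := by
    intro a w
    have := DFunLike.congr_fun (hJsq a) w
    simpa [Module.End.mul_apply] using this
  -- g_a is symmetric : ω u (J a v) = ω v (J a u)
  have hg : ∀ (a : Fin 3) (u v : V), ω u (J a v) = ω v (J a u) := by
    intro a u v
    have h1 : ω (J a v) (J a (J a u)) = ω v (J a u) := hherm a v (J a u)
    rw [hJsq'] at h1
    have h2 : ω (J a v) (-u) = - ω (J a v) u := by simp
    rw [h2] at h1
    rw [hskew u (J a v), ← h1]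
  -- ω u (A v) is symmetric in u, v
  have hsA : ∀ u v : V, ω u (A v) = ω v (A u) := by
    intro u v
    rw [hskew u (A v), hAskew v u, neg_neg]
  -- ω u (J a (A v)) is antisymmetric in u, v
  have hgA : ∀ (a : Fin 3) (u v : V), ω u (J a (A v)) = - ω v (J a (A u)) := by
    intro a u v
    rw [hg a u (A v), hAskew v (J a u), hAJ a u]
  simp only [curvR, Fin.sum_univ_three,
    hAskew, hAJ,
    hskew y x, hskew z x, hskew z y,
    hsA z x, hsA z y, hsA y x,
    hg 0 y x, hg 1 y x, hg 2 y x,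
    hg 0 z x, hg 1 z x, hg 2 z x,
    hg 0 z y, hg 1 z y, hg 2 z y,
    hgA 0 y x, hgA 1 y x, hgA 2 y x,
    hgA 0 z x, hgA 1 z x, hgA 2 z x,
    hgA 0 z y, hgA 1 z y, hgA 2 z y]
  module
end

section
/- With R_A as in the curvature formula (equation for R_A^{Q,ω}) and A = J1 (an element of sp(1)), R_A also satisfies the first Bianchi identity: the cyclic sum of R_{J1}(x,y)z over (x,y,z) vanishes. -/
/- STATEMENT 7: With A = J₁ ∈ sp(1), R_A satisfies the first Bianchi identity:
the cyclic sum of R_{J₁}(x,y)z over (x,y,z) vanishes. -/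
theorem stmt7 (V : Type*) [AddCommGroup V] [Module ℝ V] [FiniteDimensional ℝ V]
    (n : ℕ) (hdim : Module.finrank ℝ V = 4 * n)
    (J : Fin 3 → Module.End ℝ V)
    (hJsq : ∀ a, J a * J a = -1)
    (hJJJ : J 0 * J 1 * J 2 = -1)
    (ω : LinearMap.BilinForm ℝ V)
    (hskew : ∀ x y, ω x y = - ω y x)
    (hnd : ∀ x, (∀ y, ω x y = 0) → x = 0)
    (hherm : ∀ (a : Fin 3) x y, ω (J a x) (J a y) = ω x y)
    (κ : ℝ) (hκ : κ ≠ 0) :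
    ∀ x y z : V,
      curvR ω J (J 0) κ x y z + curvR ω J (J 0) κ y z x + curvR ω J (J 0) κ z x y = 0 := by
  -- operator identities
  have h01 : J 0 * J 1 = J 2 := by
    have h2 := hJsq 2
    calc J 0 * J 1 = -(J 0 * J 1 * (J 2 * J 2)) := by rw [h2]; noncomm_ring
    _ = -(J 0 * J 1 * J 2 * J 2) := by noncomm_ring
    _ = J 2 := by rw [hJJJ]; noncomm_ring
  have h10 : J 1 * J 0 = -J 2 := by
    have h0 := hJsq 0
    have h1 := hJsq 1
    have h2 := hJsq 2
    calc J 1 * J 0 = (J 0 * J 0) * (J 1 * J 0) * (J 1 * J 1) := by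
          rw [h0, h1]; noncomm_ring
    _ = J 0 * ((J 0 * J 1) * (J 0 * J 1)) * J 1 := by noncomm_ring
    _ = J 0 * (J 2 * J 2) * J 1 := by rw [h01]
    _ = -(J 0 * J 1) := by rw [h2]; noncomm_ring
    _ = -J 2 := by rw [h01]
  have h20 : J 2 * J 0 = J 1 := by
    have h0 := hJsq 0
    calc J 2 * J 0 = (J 0 * J 1) * J 0 := by rw [h01]
    _ = J 0 * (J 1 * J 0) := by noncomm_ring
    _ = J 0 * (-J 2) := by rw [h10]
    _ = -(J 0 * (J 0 * J 1)) := by rw [h01]; noncomm_ring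
    _ = -((J 0 * J 0) * J 1) := by noncomm_ring
    _ = J 1 := by rw [h0]; noncomm_ring
  have h02 : J 0 * J 2 = -J 1 := by
    have h0 := hJsq 0
    calc J 0 * J 2 = J 0 * (J 0 * J 1) := by rw [h01]
    _ = (J 0 * J 0) * J 1 := by noncomm_ring
    _ = -J 1 := by rw [h0]; noncomm_ring
  -- pointwise versions
  have pmul : ∀ (P Q : Module.End ℝ V) (v : V), (P * Q) v = P (Q v) := fun P Q v => rfl
  have p00 : ∀ v : V, J 0 (J 0 v) = -v := by
    intro v; have := congrArg (fun M : Module.End ℝ V => M v) (hJsq 0); simpa using this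
  have p01 : ∀ v : V, J 0 (J 1 v) = J 2 v := by
    intro v; exact congrArg (fun M : Module.End ℝ V => M v) h01
  have p10 : ∀ v : V, J 1 (J 0 v) = -(J 2 v) := by
    intro v; have := congrArg (fun M : Module.End ℝ V => M v) h10; simpa using this
  have p02 : ∀ v : V, J 0 (J 2 v) = -(J 1 v) := by
    intro v; have := congrArg (fun M : Module.End ℝ V => M v) h02; simpa using this
  have p20 : ∀ v : V, J 2 (J 0 v) = J 1 v := by
    intro v; exact congrArg (fun M : Module.End ℝ V => M v) h20
  -- ω moves
  have hA : ∀ (a : Fin 3) (u w : V), ω (J a u) w = -ω u (J a w) := by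
    intro a u w
    have hw : w = -(J a (J a w)) := by
      have := congrArg (fun M : Module.End ℝ V => M w) (hJsq a); simp at this
      rw [this, neg_neg]
    calc ω (J a u) w = ω (J a u) (-(J a (J a w))) := by rw [← hw]
    _ = -ω (J a u) (J a (J a w)) := by simp
    _ = -ω u (J a w) := by rw [hherm a u (J a w)]
  have hsym : ∀ (a : Fin 3) (u w : V), ω w (J a u) = ω u (J a w) := by
    intro a u w
    rw [hskew w (J a u), hA a u w, neg_neg]
  intro x y z
  simp only [curvR, Fin.sum_univ_three]
  simp only [hA, p00, p01, p10, p02, p20, map_neg, LinearMap.neg_apply, neg_neg]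
  -- orient ω atoms: ω y x → -ω x y etc.
  simp only [show ω y x = -ω x y from hskew y x, show ω z x = -ω x z from hskew z x,
      show ω z y = -ω y z from hskew z y]
  simp only [hsym 0 x y, hsym 1 x y, hsym 2 x y, hsym 0 x z, hsym 1 x z, hsym 2 x z,
    hsym 0 y z, hsym 1 y z, hsym 2 y z]
  module
end

section
/- Suppose Ric_A(x,y) = (2n+4)κ ω(A₁x,y) + 4nκ ω(A₂x,y) where A = A₁ + A₂ with A₁ ω-skew-symmetric commuting with all Ja and A₂ ∈ span{J1,J2,J3}, κ ≠ 0, and ω nondegenerate and Ja-Hermitian. Then Ric_A is Q-Hermitian (invariant under all Ja: Ric_A(JaX, JaY) = Ric_A(X,Y) for a=1,2,3) if and only if A₂ = 0. -/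
/- STATEMENT 12: With Ric_A(x,y) = (2n+4)κ ω(A₁x,y) + 4nκ ω(A₂x,y), where A₁ is
ω-skew-symmetric and commutes with all Jₐ, and A₂ ∈ span{J₁,J₂,J₃}, κ ≠ 0, ω nondegenerate
and Jₐ-Hermitian, Ric_A is Q-Hermitian (invariant under all Jₐ) if and only if A₂ = 0. -/
theorem stmt12 (V : Type*) [AddCommGroup V] [Module ℝ V] [FiniteDimensional ℝ V]
    (n : ℕ) (hn : 2 ≤ n) (hdim : Module.finrank ℝ V = 4 * n)
    (J : Fin 3 → Module.End ℝ V)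
    (hJsq : ∀ a, J a * J a = -1)
    (hJJJ : J 0 * J 1 * J 2 = -1)
    (ω : LinearMap.BilinForm ℝ V)
    (hskew : ∀ x y, ω x y = - ω y x)
    (hnd : ∀ x, (∀ y, ω x y = 0) → x = 0)
    (hherm : ∀ (a : Fin 3) x y, ω (J a x) (J a y) = ω x y)
    (κ : ℝ) (hκ : κ ≠ 0)
    (A₁ : Module.End ℝ V)
    (hA₁skew : ∀ x y, ω (A₁ x) y = - ω x (A₁ y))
    (hA₁comm : ∀ a, A₁ * J a = J a * A₁)
    (c : Fin 3 → ℝ) (A₂ : Module.End ℝ V) (hA₂ : A₂ = ∑ a : Fin 3, c a • J a) :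
    (∀ (a : Fin 3) (x y : V),
        (2 * (n : ℝ) + 4) * κ * ω (A₁ (J a x)) (J a y)
          + 4 * (n : ℝ) * κ * ω (A₂ (J a x)) (J a y)
        = (2 * (n : ℝ) + 4) * κ * ω (A₁ x) y + 4 * (n : ℝ) * κ * ω (A₂ x) y)
      ↔ A₂ = 0 := by
  -- Quaternion multiplication table
  have h00 := hJsq 0
  have h11 := hJsq 1
  have h22 := hJsq 2
  have h01 : J 0 * J 1 = J 2 := by
    have h : J 0 * J 1 * (J 2 * J 2) = (-1 : Module.End ℝ V) * J 2 := by
      rw [← mul_assoc, hJJJ]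
    rw [h22] at h
    simpa using h
  have h12 : J 1 * J 2 = J 0 := by
    have h : J 0 * (J 0 * J 1 * J 2) = J 0 * (-1 : Module.End ℝ V) := by rw [hJJJ]
    simp only [← mul_assoc] at h
    rw [h00] at h
    simp only [neg_one_mul, mul_neg_one, neg_mul] at h
    exact neg_injective h
  have h02 : J 0 * J 2 = -J 1 := by
    calc J 0 * J 2 = J 0 * (J 0 * J 1) := by rw [h01]
      _ = J 0 * J 0 * J 1 := by rw [mul_assoc]
      _ = -J 1 := by rw [h00]; simp
  have h10 : J 1 * J 0 = -J 2 := by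
    calc J 1 * J 0 = J 1 * (J 1 * J 2) := by rw [h12]
      _ = J 1 * J 1 * J 2 := by rw [mul_assoc]
      _ = -J 2 := by rw [h11]; simp
  have h21 : J 2 * J 1 = -J 0 := by
    calc J 2 * J 1 = J 0 * J 1 * J 1 := by rw [h01]
      _ = J 0 * (J 1 * J 1) := by rw [mul_assoc]
      _ = -J 0 := by rw [h11]; simp
  have h20 : J 2 * J 0 = J 1 := by
    calc J 2 * J 0 = J 0 * J 1 * J 0 := by rw [h01]
      _ = J 0 * (J 1 * J 0) := by rw [mul_assoc]
      _ = J 0 * (-J 2) := by rw [h10]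
      _ = -(J 0 * J 2) := by simp
      _ = J 1 := by rw [h02]; simp
  have q10 : J 1 * J 0 = -(J 0 * J 1) := by rw [h10, h01]
  have q20 : J 2 * J 0 = -(J 0 * J 2) := by rw [h20, h02, neg_neg]
  have q01 : J 0 * J 1 = -(J 1 * J 0) := by rw [h01, h10, neg_neg]
  have q21 : J 2 * J 1 = -(J 1 * J 2) := by rw [h21, h12]
  have q02 : J 0 * J 2 = -(J 2 * J 0) := by rw [h02, h20]
  have q12 : J 1 * J 2 = -(J 2 * J 1) := by rw [h12, h21, neg_neg]
  have cross : ∀ (a b : Fin 3), J b * J a = -(J a * J b) →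
      ∀ x y, ω (J b (J a x)) (J a y) = -ω (J b x) y := by
    intro a b hab x y
    have hx : J b (J a x) = -(J a (J b x)) := by
      have := congrArg (fun f : Module.End ℝ V => f x) hab
      simpa using this
    rw [hx]
    simp [hherm]
  have hA1 : ∀ (a : Fin 3) (x y : V), ω (A₁ (J a x)) (J a y) = ω (A₁ x) y := by
    intro a x y
    have h1 : A₁ (J a x) = J a (A₁ x) := by
      have := congrArg (fun f : Module.End ℝ V => f x) (hA₁comm a)
      simpa using this
    rw [h1, hherm]
  have hA₂x : ∀ x : V, A₂ x = c 0 • J 0 x + c 1 • J 1 x + c 2 • J 2 x := by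
    intro x
    rw [hA₂]
    simp [Fin.sum_univ_three]
  constructor
  · intro H
    have hkey : ∀ (a : Fin 3) (x y : V), ω (A₂ (J a x)) (J a y) = ω (A₂ x) y := by
      intro a x y
      have h := H a x y
      rw [hA1] at h
      have h2 : 4 * (n : ℝ) * κ * ω (A₂ (J a x)) (J a y) = 4 * (n : ℝ) * κ * ω (A₂ x) y :=
        add_left_cancel h
      have hne : 4 * (n : ℝ) * κ ≠ 0 := by
        have hn' : (n : ℝ) ≠ 0 := by positivity
        exact mul_ne_zero (mul_ne_zero (by norm_num) hn') hκ
      exact mul_left_cancel₀ hne h2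
    have e0 : ∀ x y : V, c 1 * ω (J 1 x) y + c 2 * ω (J 2 x) y = 0 := by
      intro x y
      have h := hkey 0 x y
      rw [hA₂x (J 0 x), hA₂x x] at h
      simp only [map_add, map_smul, LinearMap.add_apply, LinearMap.smul_apply,
        smul_eq_mul] at h
      rw [hherm 0 (J 0 x) y, cross 0 1 q10 x y, cross 0 2 q20 x y] at h
      linarith
    have e1 : ∀ x y : V, c 0 * ω (J 0 x) y + c 2 * ω (J 2 x) y = 0 := by
      intro x y
      have h := hkey 1 x y
      rw [hA₂x (J 1 x), hA₂x x] at h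
      simp only [map_add, map_smul, LinearMap.add_apply, LinearMap.smul_apply,
        smul_eq_mul] at h
      rw [hherm 1 (J 1 x) y, cross 1 0 q01 x y, cross 1 2 q21 x y] at h
      linarith
    have e2 : ∀ x y : V, c 0 * ω (J 0 x) y + c 1 * ω (J 1 x) y = 0 := by
      intro x y
      have h := hkey 2 x y
      rw [hA₂x (J 2 x), hA₂x x] at h
      simp only [map_add, map_smul, LinearMap.add_apply, LinearMap.smul_apply,
        smul_eq_mul] at h
      rw [hherm 2 (J 2 x) y, cross 2 0 q02 x y, cross 2 1 q12 x y] at h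
      linarith
    have hz : ∀ x : V, A₂ x = 0 := by
      intro x
      apply hnd
      intro y
      rw [hA₂x x]
      simp only [map_add, map_smul, LinearMap.add_apply, LinearMap.smul_apply,
        smul_eq_mul]
      linarith [e0 x y, e1 x y, e2 x y]
    exact LinearMap.ext hz
  · intro h a x y
    rw [h]
    simp only [LinearMap.zero_apply, map_zero, LinearMap.zero_apply, mul_zero, add_zero]
    rw [hA1]
end
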